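/- Let S be an inverse semigroup and A a proper filter in S. Then for each a ∈ A, A = (a·d(A))↑, where d(A) = (A⁻¹A)↑. -/
import Mathlib


/-- An inverse semigroup with zero: associative multiplication, unique
generalized inverses, and a multiplicatively absorbing zero. -/
structure InvSemigroupZero (S : Type*) [Mul S] [Inv S] [Zero S] : Prop where
  mul_assoc : ∀ a b c : S, a * b * c = a * (b * c)
  mul_inv_mul : ∀ a : S, a * a⁻¹ * a = a
  inv_mul_inv : ∀ a : S, a⁻¹ * a * a⁻¹ = a⁻¹
  inv_unique : ∀ a t : S, a * t * a = a → t * a * t = t → t = a⁻¹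
  zero_mul : ∀ a : S, 0 * a = 0
  mul_zero : ∀ a : S, a * 0 = 0

def IsIdem {S : Type*} [Mul S] (e : S) : Prop := e * e = e

/-- The natural partial order: `s ≤ t` iff `s = t e` for some idempotent `e`. -/
def natLe {S : Type*} [Mul S] (s t : S) : Prop := ∃ e : S, IsIdem e ∧ s = t * e

/-- `s` and `t` are compatible iff `s⁻¹ t` and `s t⁻¹` are idempotents. -/
def Compat {S : Type*} [Mul S] [Inv S] (s t : S) : Prop :=
  IsIdem (s⁻¹ * t) ∧ IsIdem (s * t⁻¹)

/-- Upward closure of a subset in the natural partial order. -/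
def upc {S : Type*} [Mul S] (X : Set S) : Set S := {s | ∃ x ∈ X, natLe x s}

/-- A filter: nonempty, upward closed and downward directed. -/
def IsFilt {S : Type*} [Mul S] (A : Set S) : Prop :=
  A.Nonempty ∧ (∀ a ∈ A, ∀ s, natLe a s → s ∈ A) ∧
    ∀ a ∈ A, ∀ b ∈ A, ∃ c ∈ A, natLe c a ∧ natLe c b

/-- A proper filter: a filter not containing `0`. -/
def IsPFilt {S : Type*} [Mul S] [Zero S] (A : Set S) : Prop := IsFilt A ∧ (0 : S) ∉ A

def dF {S : Type*} [Mul S] [Inv S] (A : Set S) : Set S :=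
  upc {p | ∃ a ∈ A, ∃ b ∈ A, p = a⁻¹ * b}

def rF {S : Type*} [Mul S] [Inv S] (A : Set S) : Set S :=
  upc {p | ∃ a ∈ A, ∃ b ∈ A, p = a * b⁻¹}

def invF {S : Type*} [Inv S] (A : Set S) : Set S := Inv.inv '' A

def mulF {S : Type*} [Mul S] (A B : Set S) : Set S :=
  upc {p | ∃ a ∈ A, ∃ b ∈ B, p = a * b}

/-- An ultrafilter: a maximal proper filter. -/
def IsUltraF {S : Type*} [Mul S] [Zero S] (A : Set S) : Prop :=
  IsPFilt A ∧ ∀ B : Set S, IsPFilt B → A ⊆ B → A = B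

section
variable {S : Type*} [Mul S] [Inv S] [Zero S]

private lemma abs1 (hS : InvSemigroupZero S) {x y z : S} (h : x * y = z) (w : S) : x * (y * w) = z * w := by
  rw [← hS.mul_assoc, h]

private lemma abs2 (hS : InvSemigroupZero S) {x y z v : S} (h : x * (y * z) = v) (w : S) :
    x * (y * (z * w)) = v * w := by
  rw [← hS.mul_assoc y z w, ← hS.mul_assoc x (y * z) w, h]

private lemma abs3 (hS : InvSemigroupZero S) {x y z u v : S} (h : x * (y * (z * u)) = v) (w : S) :
    x * (y * (z * (u * w))) = v * w := by
  rw [← hS.mul_assoc z u w, ← hS.mul_assoc y (z * u) w, ← hS.mul_assoc x _ w, h]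

lemma inv_inv' (hS : InvSemigroupZero S) (a : S) : a⁻¹⁻¹ = a :=
  (hS.inv_unique a⁻¹ a (hS.inv_mul_inv a) (hS.mul_inv_mul a)).symm

lemma idem_inv (hS : InvSemigroupZero S) {e : S} (he : IsIdem e) : e⁻¹ = e := by
  refine (hS.inv_unique e e ?_ ?_).symm <;> rw [he, he]

lemma idem_mul_inv (hS : InvSemigroupZero S) (a : S) : IsIdem (a * a⁻¹) := by
  show _ = _
  rw [hS.mul_assoc, abs2 hS (by rw [← hS.mul_assoc, hS.mul_inv_mul] : a * (a⁻¹ * a) = a)]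

lemma idem_inv_mul (hS : InvSemigroupZero S) (a : S) : IsIdem (a⁻¹ * a) := by
  show _ = _
  rw [hS.mul_assoc, abs2 hS (by rw [← hS.mul_assoc, hS.inv_mul_inv] : a⁻¹ * (a * a⁻¹) = a⁻¹)]

lemma idem_mul (hS : InvSemigroupZero S) {e f : S} (he : IsIdem e) (hf : IsIdem f) : IsIdem (e * f) := by
  set b := (e * f)⁻¹ with hb
  have key : e * (f * (b * (e * f))) = e * f := by
    have := hS.mul_inv_mul (e * f); simp only [hS.mul_assoc] at this; exact this
  have key2 : b * (e * (f * b)) = b := by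
    have := hS.inv_mul_inv (e * f); simp only [hS.mul_assoc] at this; exact this
  have h1 : f * b * e = b := by
    refine hS.inv_unique (e * f) (f * b * e) ?_ ?_
    · simp only [hS.mul_assoc, abs1 hS he, abs1 hS hf]
      exact key
    · simp only [hS.mul_assoc, abs1 hS he, abs1 hS hf, abs3 hS key2]
  have h1' : f * (b * e) = b := by
    have := h1; simp only [hS.mul_assoc] at this; exact this
  have hbb : IsIdem b := by
    have : f * (b * e) * (f * (b * e)) = f * (b * e) := by
      simp only [hS.mul_assoc, abs3 hS key2]
    rw [h1'] at this; exact this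
  have : e * f = b := by rw [← idem_inv hS hbb, hb, inv_inv' hS]
  show _ = _
  rw [this]; exact hbb

lemma idem_comm (hS : InvSemigroupZero S) {e f : S} (he : IsIdem e) (hf : IsIdem f) : e * f = f * e := by
  have hef := idem_mul hS he hf
  have hfe := idem_mul hS hf he
  have h1 : (e * f) * (f * e) * (e * f) = e * f := by
    simp only [hS.mul_assoc, abs1 hS he, abs1 hS hf]
    have this2 : e * f * (e * f) = e * f := hef
    simp only [hS.mul_assoc] at this2; exact this2
  have h2 : (f * e) * (e * f) * (f * e) = f * e := by
    simp only [hS.mul_assoc, abs1 hS he, abs1 hS hf]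
    have this2 : f * e * (f * e) = f * e := hfe
    simp only [hS.mul_assoc] at this2; exact this2
  have := hS.inv_unique (e * f) (f * e) h1 h2
  rw [this, idem_inv hS hef]

lemma mul_inv_rev' (hS : InvSemigroupZero S) (a b : S) : (a * b)⁻¹ = b⁻¹ * a⁻¹ := by
  have hc : b * (b⁻¹ * (a⁻¹ * a)) = a⁻¹ * (a * (b * b⁻¹)) := by
    have := idem_comm hS (idem_mul_inv hS b) (idem_inv_mul hS a)
    simp only [hS.mul_assoc] at this; exact this
  have ha' : a * (a⁻¹ * a) = a := by rw [← hS.mul_assoc, hS.mul_inv_mul]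
  have hb' : b * (b⁻¹ * b) = b := by rw [← hS.mul_assoc, hS.mul_inv_mul]
  have hainv : a⁻¹ * (a * a⁻¹) = a⁻¹ := by rw [← hS.mul_assoc, hS.inv_mul_inv]
  have hbinv : b⁻¹ * (b * b⁻¹) = b⁻¹ := by rw [← hS.mul_assoc, hS.inv_mul_inv]
  refine (hS.inv_unique (a * b) (b⁻¹ * a⁻¹) ?_ ?_).symm
  · simp only [hS.mul_assoc]
    rw [abs3 hS hc b]
    simp only [hS.mul_assoc]
    rw [hb', abs2 hS ha' b]
  · simp only [hS.mul_assoc]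
    rw [abs3 hS hc.symm a⁻¹]
    simp only [hS.mul_assoc]
    rw [abs2 hS hbinv, hainv]

lemma natLe_refl (hS : InvSemigroupZero S) (a : S) : natLe a a :=
  ⟨a⁻¹ * a, idem_inv_mul hS a, by rw [← hS.mul_assoc, hS.mul_inv_mul]⟩

lemma natLe_trans (hS : InvSemigroupZero S) {s t u : S} (h1 : natLe s t) (h2 : natLe t u) : natLe s u := by
  obtain ⟨e, he, hse⟩ := h1
  obtain ⟨f, hf, htf⟩ := h2
  exact ⟨f * e, idem_mul hS hf he, by rw [hse, htf, hS.mul_assoc]⟩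

lemma left_natLe (hS : InvSemigroupZero S) {f t : S} (hf : IsIdem f) : natLe (f * t) t := by
  have hc : t * (t⁻¹ * f) = f * (t * t⁻¹) := by
    have := idem_comm hS (idem_mul_inv hS t) hf
    simp only [hS.mul_assoc] at this; exact this
  have ht' : t * (t⁻¹ * t) = t := by rw [← hS.mul_assoc, hS.mul_inv_mul]
  refine ⟨t⁻¹ * (f * t), ?_, ?_⟩
  · show _ = _
    simp only [hS.mul_assoc]
    rw [abs2 hS hc t]
    simp only [hS.mul_assoc]
    rw [ht', abs1 hS hf]
  · rw [abs2 hS hc t]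
    simp only [hS.mul_assoc]
    rw [ht']

lemma inv_natLe (hS : InvSemigroupZero S) {s t : S} (h : natLe s t) : natLe s⁻¹ t⁻¹ := by
  obtain ⟨e, he, hs⟩ := h
  rw [hs, mul_inv_rev' hS, idem_inv hS he]
  exact left_natLe hS he

lemma mul_natLe_left (hS : InvSemigroupZero S) {s t : S} (x : S) (h : natLe s t) : natLe (x * s) (x * t) := by
  obtain ⟨e, he, hs⟩ := h
  exact ⟨e, he, by rw [hs, ← hS.mul_assoc]⟩

lemma mul_natLe_right (hS : InvSemigroupZero S) {s t : S} (x : S) (h : natLe s t) : natLe (s * x) (t * x) := by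
  obtain ⟨e, he, hs⟩ := h
  have hc : x * (x⁻¹ * e) = e * (x * x⁻¹) := by
    have := idem_comm hS (idem_mul_inv hS x) he
    simp only [hS.mul_assoc] at this; exact this
  have hx' : x * (x⁻¹ * x) = x := by rw [← hS.mul_assoc, hS.mul_inv_mul]
  refine ⟨x⁻¹ * (e * x), ?_, ?_⟩
  · show _ = _
    simp only [hS.mul_assoc]
    rw [abs2 hS hc x]
    simp only [hS.mul_assoc]
    rw [hx', abs1 hS he]
  · rw [hs]
    simp only [hS.mul_assoc]
    rw [abs2 hS hc x]
    simp only [hS.mul_assoc]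
    rw [hx']

end

/-- For a proper filter `A` and `a ∈ A`, we have `A = (a · d(A))↑`. -/
theorem proper_filter_eq_up_mul_dF {S : Type*} [Mul S] [Inv S] [Zero S]
    (hS : InvSemigroupZero S) (A : Set S) (hA : IsPFilt A) (a : S) (ha : a ∈ A) :
    A = upc {x | ∃ y ∈ dF A, x = a * y} := by
  ext s
  constructor
  · intro hs
    refine ⟨a * (a⁻¹ * s), ⟨a⁻¹ * s, ?_, rfl⟩, ?_⟩
    · exact ⟨a⁻¹ * s, ⟨a, ha, s, hs, rfl⟩, natLe_refl hS _⟩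
    · rw [← hS.mul_assoc]
      exact left_natLe hS (idem_mul_inv hS a)
  · rintro ⟨x, ⟨y, hy, rfl⟩, hxs⟩
    obtain ⟨p, ⟨b, hb, c, hc, rfl⟩, hpy⟩ := hy
    obtain ⟨⟨hne, hup, hdir⟩, h0⟩ := hA
    obtain ⟨d, hd, hda, hdb⟩ := hdir a ha b hb
    obtain ⟨u, hu, hud, huc⟩ := hdir d hd c hc
    have h1 : natLe (u * u⁻¹) (d * d⁻¹) :=
      natLe_trans hS (mul_natLe_left hS u (inv_natLe hS hud)) (mul_natLe_right hS d⁻¹ hud)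
    have h2 : natLe (d * d⁻¹) (a * b⁻¹) :=
      natLe_trans hS (mul_natLe_right hS d⁻¹ hda) (mul_natLe_left hS a (inv_natLe hS hdb))
    have h3 : natLe (u * u⁻¹ * u) (a * b⁻¹ * c) :=
      natLe_trans hS (mul_natLe_right hS u (natLe_trans hS h1 h2))
        (mul_natLe_left hS (a * b⁻¹) huc)
    rw [hS.mul_inv_mul, hS.mul_assoc] at h3
    have h4 : natLe (a * (b⁻¹ * c)) (a * y) := mul_natLe_left hS a hpy
    exact hup u hu s (natLe_trans hS h3 (natLe_trans hS h4 hxs))
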